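/- The map R ↦ orn_R is a meet-semilattice morphism from the lattice of transitively closed reorientations of tc(D) to the ornamentation lattice Orn(D): for transitively closed reorientations R₁, R₂, we have orn_{R₁ ∧ R₂} = orn_{R₁} ∧ orn_{R₂}, where the meet of reorientations is intersection of reversed edge sets and the meet of ornamentations sends v to the maximal ornament at v contained in orn_{R₁}(v) ∩ orn_{R₂}(v). -/

import Mathlib

/-- A directed path from `u` to `v` in the digraph `D` using only vertices of `U`. -/
def pathIn {V : Type*} (D : V → V → Prop) (U : Set V) (u v : V) : Prop :=
  Relation.ReflTransGen (fun a b => D a b ∧ a ∈ U ∧ b ∈ U) u v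

/-- An ornament of `D` at `v`. -/
def IsOrnament {V : Type*} (D : V → V → Prop) (v : V) (U : Set V) : Prop :=
  v ∈ U ∧ ∀ u ∈ U, pathIn D U u v

/-- The inclusion maximal ornament of `D` at `v` contained in `X`. -/
def maxOrnIn {V : Type*} (D : V → V → Prop) (v : V) (X : Set V) : Set V :=
  ⋃₀ {U | IsOrnament D v U ∧ U ⊆ X}

/-- The ornamentation `orn_R` associated to a reorientation with reversed edge set `rev`. -/
def ornOfRev {V : Type*} (D rev : V → V → Prop) (v : V) : Set V :=
  maxOrnIn D v {u | Relation.ReflTransGen rev u v}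

/-- A transitively closed reorientation of `tc(D)`. -/
def IsTCReori {V : Type*} (D rev : V → V → Prop) : Prop :=
  (∀ u v, rev u v → Relation.TransGen D u v) ∧ Transitive rev

lemma rtg_cases {V : Type*} {rev : V → V → Prop} (ht : Transitive rev) {u v : V}
    (h : Relation.ReflTransGen rev u v) : u = v ∨ rev u v := by
  induction h with
  | refl => exact Or.inl rfl
  | tail _ h₂ ih =>
    rcases ih with rfl | h
    · exact Or.inr h₂
    · exact Or.inr (ht h h₂)

/-- `R ↦ orn_R` is a meet-semilattice morphism from the lattice of transitively closed
reorientations of `tc(D)` (meet = intersection of reversed edge sets) to the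
ornamentation lattice (meet at `v` = maximal ornament at `v` inside the intersection). -/
theorem ornOfRev_meet_morphism {V : Type*} (D rev₁ rev₂ : V → V → Prop)
    (h₁ : IsTCReori D rev₁) (h₂ : IsTCReori D rev₂) :
    ∀ v, ornOfRev D (fun a b => rev₁ a b ∧ rev₂ a b) v =
      maxOrnIn D v (ornOfRev D rev₁ v ∩ ornOfRev D rev₂ v) := by
  intro v
  ext x
  simp only [ornOfRev, maxOrnIn, Set.mem_sUnion, Set.mem_setOf_eq]
  constructor
  · rintro ⟨U, ⟨hU, hsub⟩, hx⟩
    refine ⟨U, ⟨hU, fun u hu => ?_⟩, hx⟩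
    constructor
    · exact Set.mem_sUnion.2 ⟨U, ⟨hU, fun w hw =>
        Relation.ReflTransGen.mono (fun a b h => h.1) _ _ (hsub hw)⟩, hu⟩
    · exact Set.mem_sUnion.2 ⟨U, ⟨hU, fun w hw =>
        Relation.ReflTransGen.mono (fun a b h => h.2) _ _ (hsub hw)⟩, hu⟩
  · rintro ⟨U, ⟨hU, hsub⟩, hx⟩
    refine ⟨U, ⟨hU, fun u hu => ?_⟩, hx⟩
    obtain ⟨hu1, hu2⟩ := hsub hu
    obtain ⟨W₁, ⟨_, hW₁⟩, huW₁⟩ := Set.mem_sUnion.1 hu1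
    obtain ⟨W₂, ⟨_, hW₂⟩, huW₂⟩ := Set.mem_sUnion.1 hu2
    have r1 : u = v ∨ rev₁ u v := rtg_cases h₁.2 (hW₁ huW₁)
    have r2 : u = v ∨ rev₂ u v := rtg_cases h₂.2 (hW₂ huW₂)
    rcases r1 with rfl | r1
    · exact Relation.ReflTransGen.refl
    rcases r2 with rfl | r2
    · exact Relation.ReflTransGen.refl
    · exact Relation.ReflTransGen.single ⟨r1, r2⟩
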